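/- Let G be a metrizable abelian topological group. If the product G × Ĝ of G with its Pontryagin dual is a k-space, then Ĝ is locally compact. -/

import Mathlib

open Filter Topology Set
open scoped Pointwise

/-- A k-space: a set is closed as soon as its intersection with every compact set `K`
is closed in `K`. -/
def KSpace (X : Type*) [TopologicalSpace X] : Prop :=
  ∀ C : Set X, (∀ K : Set X, IsCompact K → IsClosed ((↑·) ⁻¹' C : Set K)) → IsClosed C

/-- Variant of `ContinuousMonoidHom.locallyCompactSpace_of_equicontinuousAt` where local
compactness of the domain is replaced by the assumption that the relevant set of
continuous homomorphisms is a neighborhood of `1`. -/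
theorem aux_lc {X Y : Type*} [TopologicalSpace X] [Group X] [IsTopologicalGroup X]
    [UniformSpace Y] [CommGroup Y] [IsUniformGroup Y] [T0Space Y] [CompactSpace Y]
    (U : Set X) (W : Set Y) (hWc : IsClosed W)
    (hnhds : {f : ContinuousMonoidHom X Y | Set.MapsTo f U W} ∈ 𝓝 (1 : ContinuousMonoidHom X Y))
    (h : Equicontinuous (fun f : {f : X →* Y | Set.MapsTo f U W} ↦ (f : X → Y))) :
    LocallyCompactSpace (ContinuousMonoidHom X Y) := by
  let S1 : Set (X →* Y) := {f | Set.MapsTo f U W}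
  let S2 : Set (ContinuousMonoidHom X Y) := {f | Set.MapsTo f U W}
  let S3 : Set C(X, Y) := (↑) '' S2
  let S4 : Set (X → Y) := (↑) '' S3
  have hS4 : S4 = (↑) '' S1 := by
    ext
    constructor
    · rintro ⟨-, ⟨f, hf, rfl⟩, rfl⟩
      exact ⟨f, hf, rfl⟩
    · rintro ⟨f, hf, rfl⟩
      exact ⟨⟨f, h.continuous ⟨f, hf⟩⟩, ⟨⟨f, h.continuous ⟨f, hf⟩⟩, hf, rfl⟩, rfl⟩
  replace h : Equicontinuous ((↑) : S3 → X → Y) := by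
    rw [equicontinuous_iff_range, ← Set.image_eq_range] at h ⊢
    rwa [← hS4] at h
  replace hS4 : S4 = Set.pi U (fun _ ↦ W) ∩ Set.range ((↑) : (X →* Y) → (X → Y)) := by
    simp_rw [hS4, Set.ext_iff, Set.mem_image, S1, Set.mem_setOf_eq]
    exact fun f ↦ ⟨fun ⟨g, hg, hf⟩ ↦ hf ▸ ⟨hg, g, rfl⟩, fun ⟨hg, g, hf⟩ ↦ ⟨g, hf ▸ hg, hf⟩⟩
  replace hS4 : IsClosed S4 :=
    hS4.symm ▸ (isClosed_set_pi (fun _ _ ↦ hWc)).inter (MonoidHom.isClosed_range_coe X Y)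
  have hS2 : (interior S2).Nonempty := ⟨1, mem_interior_iff_mem_nhds.mpr hnhds⟩
  exact TopologicalSpace.PositiveCompacts.locallyCompactSpace_of_group
    ⟨⟨S2, (ContinuousMonoidHom.isInducing_toContinuousMap X Y).isCompact_iff.mpr
      (ArzelaAscoli.isCompact_of_equicontinuous S3 hS4.isCompact h)⟩, hS2⟩

theorem stmt16 {G : Type*} [CommGroup G] [TopologicalSpace G] [IsTopologicalGroup G]
    [TopologicalSpace.MetrizableSpace G] (hk : KSpace (G × PontryaginDual G)) :
    LocallyCompactSpace (PontryaginDual G) := by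
  -- Step 1: the evaluation map is continuous since `G × Ĝ` is a k-space.
  have he : Continuous (fun p : G × PontryaginDual G => p.2 p.1) := by
    rw [continuous_iff_isClosed]
    intro C hC
    apply hk
    intro K hK
    have hK1 : IsCompact (Prod.fst '' K : Set G) := hK.image continuous_fst
    haveI : CompactSpace (Prod.fst '' K : Set G) := isCompact_iff_compactSpace.mp hK1
    have h1 : Continuous (fun k : K =>
        (((k : G × PontryaginDual G).2.toContinuousMap).comp
          ⟨Subtype.val, continuous_subtype_val⟩ : C((Prod.fst '' K : Set G), Circle))) :=
      (ContinuousMap.continuous_precomp _).comp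
        ((ContinuousMonoidHom.isInducing_toContinuousMap G Circle).continuous.comp
          (continuous_snd.comp continuous_subtype_val))
    have h2 : Continuous (fun k : K => (⟨(k : G × PontryaginDual G).1,
        Set.mem_image_of_mem Prod.fst k.2⟩ : (Prod.fst '' K : Set G))) :=
      Continuous.subtype_mk (continuous_fst.comp continuous_subtype_val) _
    have hcont : Continuous (fun k : K =>
        ((k : G × PontryaginDual G).2) (k : G × PontryaginDual G).1) :=
      continuous_eval.comp (h1.prodMk h2)
    exact hC.preimage hcont
  -- Step 2: the shrinking basis on the circle, as in Mathlib's PontryaginDual instance.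
  let Vn : ℕ → Set Circle :=
    fun n ↦ Circle.exp '' { x | |x| < Real.pi / 2 ^ (n + 1)}
  have hVn : ∀ n x, x ∈ Vn n ↔ |Complex.arg x| < Real.pi / 2 ^ (n + 1) := by
    refine fun n x ↦ ⟨?_, fun hx ↦ ⟨Complex.arg x, hx, Circle.exp_arg x⟩⟩
    rintro ⟨t, ht : |t| < _, rfl⟩
    have ht' := ht.trans_le (div_le_self Real.pi_nonneg (one_le_pow₀ one_le_two))
    rwa [Circle.arg_exp (neg_lt_of_abs_lt ht') (lt_of_abs_lt ht').le]
  have hV : ∀ {n : ℕ} {x : Circle}, x ∈ Vn n → x * x ∈ Vn n → x ∈ Vn (n + 1) := by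
    intro n x h1 h2
    rw [hVn] at h1 h2 ⊢
    rwa [Circle.coe_mul, Complex.arg_mul x.coe_ne_zero x.coe_ne_zero,
      ← two_mul, abs_mul, abs_two, ← lt_div_iff₀' two_pos, div_div, ← pow_succ] at h2
    apply Set.Ioo_subset_Ioc_self
    rw [← two_mul, Set.mem_Ioo, ← abs_lt, abs_mul, abs_two, ← lt_div_iff₀' two_pos]
    exact h1.trans_le
      (div_le_div_of_nonneg_left Real.pi_nonneg two_pos (le_self_pow₀ one_le_two n.succ_ne_zero))
  have hVo : Filter.HasBasis (𝓝 (1 : Circle)) (fun _ ↦ True) Vn := by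
    rw [← Circle.exp_zero, ← isLocalHomeomorph_circleExp.map_nhds_eq 0]
    refine ((nhds_basis_zero_abs_lt ℝ).to_hasBasis
        (fun x hx ↦ ⟨Nat.ceil (Real.pi / x), trivial, fun t ht ↦ ?_⟩)
          fun k _ ↦ ⟨Real.pi / 2 ^ (k + 1), by positivity, le_rfl⟩).map Circle.exp
    rw [Set.mem_setOf_eq] at ht ⊢
    refine lt_of_lt_of_le ht ?_
    rw [div_le_iff₀' (pow_pos two_pos _), ← div_le_iff₀ hx]
    refine (Nat.le_ceil (Real.pi / x)).trans ?_
    exact_mod_cast (Nat.le_succ _).trans (Nat.lt_two_pow_self (n := _)).le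
  -- A compact closed neighborhood of 1 inside `Vn 0`.
  obtain ⟨Vc, hVc1, hVcV, hVcc⟩ := local_compact_nhds (hVo.mem_of_mem (i := 0) trivial)
  -- Continuity of evaluation at (1,1).
  have h11 : (fun p : G × PontryaginDual G => p.2 p.1) (1, 1) = 1 := map_one _
  have hpre : (fun p : G × PontryaginDual G => p.2 p.1) ⁻¹' Vc ∈ 𝓝 ((1 : G), (1 : PontryaginDual G)) :=
    he.continuousAt.preimage_mem_nhds (by simpa using hVc1)
  rw [nhds_prod_eq] at hpre
  obtain ⟨U', hU', W, hW, hUW⟩ := Filter.mem_prod_iff.mp hpre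
  -- The shrinking neighborhood basis in `G`.
  let U_aux : ℕ → {S : Set G | S ∈ 𝓝 1} :=
    Nat.rec ⟨U', hU'⟩ <| fun _ S ↦ let h := exists_closed_nhds_one_inv_eq_mul_subset S.2
      ⟨Classical.choose h, (Classical.choose_spec h).1⟩
  let U : ℕ → Set G := fun n ↦ (U_aux n).1
  have hU1 : ∀ n, U n ∈ 𝓝 1 := fun n ↦ (U_aux n).2
  have hU2 : ∀ n, U (n + 1) * U (n + 1) ⊆ U n :=
    fun n ↦ (Classical.choose_spec (exists_closed_nhds_one_inv_eq_mul_subset (U_aux n).2)).2.2.2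
  have hU3 : ∀ n, U (n + 1) ⊆ U n :=
    fun n x hx ↦ hU2 n (mul_one x ▸ Set.mul_mem_mul hx (mem_of_mem_nhds (hU1 (n + 1))))
  have hU4 : ∀ f : G →* Circle, Set.MapsTo f (U 0) (Vn 0) → ∀ n, Set.MapsTo f (U n) (Vn n) := by
    intro f hf n
    induction' n with n ih
    · exact hf
    · exact fun x hx ↦ hV (ih (hU3 n hx)) (map_mul f x x ▸ ih (hU2 n (Set.mul_mem_mul hx hx)))
  -- Equicontinuity of the family of monoid homs mapping `U 0` into `Vc`.
  have hec : EquicontinuousAt (fun f : {f : G →* Circle | Set.MapsTo f (U 0) Vc} ↦ (f : G → Circle))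
      (1 : G) := by
    rw [hVo.uniformity_of_nhds_one.equicontinuousAt_iff_right]
    refine fun n _ ↦ Filter.eventually_iff_exists_mem.mpr ⟨U n, hU1 n, fun x hx ⟨f, hf⟩ ↦ ?_⟩
    rw [Set.mem_setOf_eq, map_one, div_one]
    exact hU4 f (hf.mono_right hVcV) n hx
  replace hec := equicontinuous_of_equicontinuousAt_one _ hec
  -- Conclude via the auxiliary lemma.
  have hnhds : {f : ContinuousMonoidHom G Circle | Set.MapsTo f (U 0) Vc} ∈
      𝓝 (1 : ContinuousMonoidHom G Circle) := by
    refine Filter.mem_of_superset hW fun χ hχ x hx ↦ ?_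
    exact hUW (Set.mk_mem_prod hx hχ)
  exact aux_lc (U 0) Vc hVcc.isClosed hnhds hec
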